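/- arXiv:1511.00879 — 2 statements merged into one kernel-verified Lean document; each statement's English description precedes it below -/
import Mathlib

section
/- In the braid group B_{m+1} with Artin generators σ_1, …, σ_m, the normal subgroup generated by the squares σ_1², …, σ_m² equals the pure braid group P_{m+1}, i.e. the kernel of the canonical surjection B_{m+1} → S_{m+1} sending σ_i to the transposition (i, i+1). -/
/-- The set of braid relations on `m` Artin generators `σ_1, …, σ_m` (indexed by `Fin m`):
commutation `σ_i σ_j = σ_j σ_i` for `|i − j| ≥ 2` and the braid relation
`σ_i σ_{i+1} σ_i = σ_{i+1} σ_i σ_{i+1}`. -/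
def braidRels (m : ℕ) : Set (FreeGroup (Fin m)) :=
  { r | (∃ i j : Fin m, (i : ℕ) + 2 ≤ (j : ℕ) ∧
          r = FreeGroup.of i * FreeGroup.of j * (FreeGroup.of i)⁻¹ * (FreeGroup.of j)⁻¹) ∨
        (∃ i j : Fin m, (i : ℕ) + 1 = (j : ℕ) ∧
          r = FreeGroup.of i * FreeGroup.of j * FreeGroup.of i *
              (FreeGroup.of j * FreeGroup.of i * FreeGroup.of j)⁻¹) }

/-- The braid group `B_{m+1}` on `m+1` strands, presented with `m` Artin generators. -/
def BraidGroup (m : ℕ) : Type := PresentedGroup (braidRels m)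

instance (m : ℕ) : Group (BraidGroup m) := by unfold BraidGroup; infer_instance

namespace BraidAux
open Subgroup Equiv

def sqRels (m : ℕ) : Set (FreeGroup (Fin m)) :=
  Set.range fun i : Fin m => (FreeGroup.of i) ^ 2

def allRels (m : ℕ) : Set (FreeGroup (Fin m)) := braidRels m ∪ sqRels m

abbrev SymG (m : ℕ) := PresentedGroup (allRels m)

def sg {m : ℕ} (i : Fin m) : SymG m := PresentedGroup.of i

lemma mk_rel {m : ℕ} {r : FreeGroup (Fin m)} (h : r ∈ allRels m) :
    PresentedGroup.mk (allRels m) r = 1 :=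
  (QuotientGroup.eq_one_iff r).mpr (Subgroup.subset_normalClosure h)

lemma sg_sq {m : ℕ} (i : Fin m) : sg i * sg i = 1 := by
  have := mk_rel (Or.inr ⟨i, rfl⟩ : FreeGroup.of i ^ 2 ∈ allRels m)
  rwa [map_pow, pow_two] at this

lemma sg_inv {m : ℕ} (i : Fin m) : (sg i)⁻¹ = sg i :=
  inv_eq_of_mul_eq_one_right (sg_sq i)

lemma sg_comm {m : ℕ} {i j : Fin m} (h : (i : ℕ) + 2 ≤ (j : ℕ)) :
    sg i * sg j = sg j * sg i := by
  have := mk_rel (Or.inl (Or.inl ⟨i, j, h, rfl⟩) : _ ∈ allRels m)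
  simp only [map_mul, map_inv] at this
  have h2 : (sg i * sg j) * (sg j * sg i)⁻¹ = 1 := by
    rw [mul_inv_rev, ← mul_assoc]; exact this
  rw [mul_inv_eq_one] at h2; exact h2

lemma sg_braid {m : ℕ} {i j : Fin m} (h : (i : ℕ) + 1 = (j : ℕ)) :
    sg i * sg j * sg i = sg j * sg i * sg j := by
  have := mk_rel (Or.inl (Or.inr ⟨i, j, h, rfl⟩) : _ ∈ allRels m)
  simp only [map_mul, map_inv] at this
  rw [mul_inv_eq_one] at this; exact this

/-- n-indexed generators of `SymG (m+1)`, with junk value 1 out of range. -/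
def og (m : ℕ) (i : ℕ) : SymG (m + 1) :=
  if h : i < m + 1 then sg ⟨i, h⟩ else 1

lemma og_sq (m i : ℕ) : og m i * og m i = 1 := by
  unfold og; split
  · exact sg_sq _
  · simp

lemma og_comm (m : ℕ) {i j : ℕ} (h : i + 2 ≤ j) : og m i * og m j = og m j * og m i := by
  unfold og
  split <;> split
  · exact sg_comm h
  · simp
  · simp
  · simp

lemma og_braid (m : ℕ) {i j : ℕ} (h : i + 1 = j) (hj : j < m + 1) :
    og m i * og m j * og m i = og m j * og m i * og m j := by
  have hi : i < m + 1 := by omega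
  unfold og
  rw [dif_pos hi, dif_pos hj]
  exact sg_braid h

lemma lift_rels (m : ℕ) : ∀ r ∈ allRels m,
    FreeGroup.lift (fun i : Fin m => (sg i.castSucc : SymG (m + 1))) r = 1 := by
  rintro r ((⟨i, j, hij, rfl⟩ | ⟨i, j, hij, rfl⟩) | ⟨i, rfl⟩)
  · simp only [map_mul, map_inv, FreeGroup.lift_apply_of]
    have hc : sg (Fin.castSucc i) * sg (Fin.castSucc j)
        = sg (Fin.castSucc j) * sg (Fin.castSucc i) := sg_comm (by simpa using hij)
    rw [hc]; group
  · simp only [map_mul, map_inv, FreeGroup.lift_apply_of]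
    rw [mul_inv_eq_one]
    exact sg_braid (by simpa using hij)
  · simp only [map_pow, FreeGroup.lift_apply_of, pow_two]
    exact sg_sq _

def ι (m : ℕ) : SymG m →* SymG (m + 1) := PresentedGroup.toGroup (lift_rels m)

@[simp] lemma ι_sg (m : ℕ) (i : Fin m) : ι m (sg i) = sg i.castSucc :=
  PresentedGroup.toGroup.of _

lemma og_eq_ι (m : ℕ) {i : ℕ} (hi : i < m) : og m i = ι m (sg ⟨i, hi⟩) := by
  rw [ι_sg]
  unfold og
  rw [dif_pos (by omega)]
  rfl

lemma og_eq_sg (m : ℕ) (i : Fin (m + 1)) : sg i = og m (i : ℕ) := by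
  unfold og
  rw [dif_pos i.isLt]

noncomputable def uu (m : ℕ) (k : ℕ) : SymG (m + 1) :=
  Nat.rec 1 (fun k x => x * og m (m - k)) k

lemma uu_zero (m : ℕ) : uu m 0 = 1 := rfl

lemma uu_succ (m k : ℕ) : uu m (k + 1) = uu m k * og m (m - k) := rfl

lemma uu_comm (m : ℕ) : ∀ k, ∀ i, i + k + 1 ≤ m → og m i * uu m k = uu m k * og m i := by
  intro k
  induction k with
  | zero => intro i _; rw [uu_zero, one_mul, mul_one]
  | succ k ih =>
      intro i hi
      have h1 : i + k + 1 ≤ m := by omega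
      have h2 : i + 2 ≤ m - k := by omega
      rw [uu_succ, ← mul_assoc, ih i h1, mul_assoc, og_comm m h2, ← mul_assoc]

lemma uu_slide (m : ℕ) : ∀ k, ∀ i, m + 2 ≤ i + k → i ≤ m → k ≤ m + 1 →
    uu m k * og m i = og m (i - 1) * uu m k := by
  intro k
  induction k with
  | zero => intro i h1 h2 _; omega
  | succ k ih =>
      intro i h1 h2 h3
      rcases Nat.lt_or_ge (i + k) (m + 2) with hc | hc
      · -- i + k = m + 1, the generator meets the last letter via the braid relation
        have hik : i + k = m + 1 := by omega
        obtain ⟨k', rfl⟩ : ∃ k', k = k' + 1 := ⟨k - 1, by omega⟩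
        have hmk : m - (k' + 1) = i - 1 := by omega
        have hmk' : m - k' = i := by omega
        have hi1 : i - 1 + 1 = i := by omega
        have hbr : og m (i - 1) * og m i * og m (i - 1)
            = og m i * og m (i - 1) * og m i := og_braid m hi1 (by omega)
        have hcm : og m (i - 1) * uu m k' = uu m k' * og m (i - 1) :=
          uu_comm m k' (i - 1) (by omega)
        show uu m (k' + 1 + 1) * og m i = og m (i - 1) * uu m (k' + 1 + 1)
        rw [uu_succ, uu_succ, hmk, hmk']
        calc uu m k' * og m i * og m (i - 1) * og m i
            = uu m k' * (og m i * og m (i - 1) * og m i) := by group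
          _ = uu m k' * (og m (i - 1) * og m i * og m (i - 1)) := by rw [← hbr]
          _ = (uu m k' * og m (i - 1)) * (og m i * og m (i - 1)) := by group
          _ = (og m (i - 1) * uu m k') * (og m i * og m (i - 1)) := by rw [← hcm]
          _ = og m (i - 1) * (uu m k' * og m i * og m (i - 1)) := by group
      · -- the generator commutes past the last letter
        have hmk : m - k + 2 ≤ i := by omega
        have hcomm : og m (m - k) * og m i = og m i * og m (m - k) :=
          og_comm m hmk
        rw [uu_succ, mul_assoc, hcomm, ← mul_assoc, ih i (by omega) h2 (by omega), mul_assoc]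

lemma mclosure_sg (m : ℕ) :
    Submonoid.closure (Set.range (sg : Fin m → SymG m)) = ⊤ := by
  have h2 : (Set.range (sg : Fin m → SymG m))⁻¹ = Set.range sg := by
    ext x
    simp only [Set.mem_inv, Set.mem_range]
    constructor
    · rintro ⟨i, hi⟩
      exact ⟨i, by rw [← sg_inv, hi, inv_inv]⟩
    · rintro ⟨i, rfl⟩
      exact ⟨i, (sg_inv i).symm⟩
  have h1 : Subgroup.closure (Set.range (sg : Fin m → SymG m)) = ⊤ :=
    PresentedGroup.closure_range_of _
  have h3 := Subgroup.closure_toSubmonoid (Set.range (sg : Fin m → SymG m))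
  rw [h1, h2, Set.union_self] at h3
  exact h3.symm

lemma exists_decomp (m : ℕ) (x : SymG (m + 1)) :
    ∃ h : SymG m, ∃ k, k ≤ m + 1 ∧ x = ι m h * uu m k := by
  refine Submonoid.induction_of_closure_eq_top_right (mclosure_sg (m + 1)) x
    ⟨1, 0, by omega, by rw [uu_zero, map_one, one_mul]⟩ ?_
  rintro x _ ⟨i, rfl⟩ ⟨h, k, hk, rfl⟩
  rw [og_eq_sg m i]
  have him : (i : ℕ) ≤ m := by omega
  rcases Nat.lt_or_ge ((i : ℕ) + k + 1) (m + 1) with hA | hrest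
  · -- commutes to the left
    have hi : (i : ℕ) < m := by omega
    refine ⟨h * sg ⟨i, hi⟩, k, hk, ?_⟩
    rw [map_mul, ← og_eq_ι m hi, mul_assoc, mul_assoc,
      uu_comm m k i (by omega)]
  · rcases Nat.lt_or_ge ((i : ℕ) + k) (m + 1) with hB | hrest2
    · -- extends the word: i + k = m
      have him2 : (i : ℕ) = m - k := by omega
      refine ⟨h, k + 1, by omega, ?_⟩
      rw [uu_succ, ← him2, mul_assoc]
    · rcases Nat.lt_or_ge ((i : ℕ) + k) (m + 2) with hC | hD
      · -- cancels the last letter: i + k = m + 1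
        obtain ⟨k', rfl⟩ : ∃ k', k = k' + 1 := ⟨k - 1, by omega⟩
        refine ⟨h, k', by omega, ?_⟩
        have : m - k' = (i : ℕ) := by omega
        rw [uu_succ, this, mul_assoc, mul_assoc, og_sq, mul_one]
      · -- slides: i + k ≥ m + 2
        have hi1 : (i : ℕ) - 1 < m := by omega
        refine ⟨h * sg ⟨(i : ℕ) - 1, hi1⟩, k, hk, ?_⟩
        rw [map_mul, ← og_eq_ι m hi1, mul_assoc, mul_assoc,
          ← uu_slide m k i hD him hk]

lemma symG_card : ∀ m : ℕ, Nonempty (Finite (SymG m)) ∧ Nat.card (SymG m) ≤ (m + 1).factorial := by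
  intro m
  induction m with
  | zero =>
      have hs : Subsingleton (SymG 0) := by
        refine subsingleton_of_forall_eq 1 fun x => ?_
        induction x using PresentedGroup.induction_on with
        | H z => rw [Subsingleton.elim z 1, map_one]
      haveI := hs
      exact ⟨⟨Finite.of_subsingleton⟩, by
        show Nat.card (SymG 0) ≤ 1
        haveI : Unique (SymG 0) := ⟨⟨1⟩, fun x => Subsingleton.elim x 1⟩
        exact le_of_eq Nat.card_unique⟩
  | succ n ih =>
      obtain ⟨⟨hfin⟩, hcard⟩ := ih
      haveI := hfin
      set F : SymG n × Fin (n + 2) → SymG (n + 1) := fun p => ι n p.1 * uu n p.2 with hF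
      have hsurj : Function.Surjective F := by
        intro x
        obtain ⟨h, k, hk, rfl⟩ := exists_decomp n x
        exact ⟨(h, ⟨k, by omega⟩), rfl⟩
      haveI : Finite (SymG (n + 1)) := Finite.of_surjective F hsurj
      refine ⟨⟨inferInstance⟩, ?_⟩
      have h1 : Nat.card (SymG (n + 1)) ≤ Nat.card (SymG n × Fin (n + 2)) :=
        Nat.card_le_card_of_surjective F hsurj
      rw [Nat.card_prod, Nat.card_eq_fintype_card (α := Fin (n+2)), Fintype.card_fin] at h1
      calc Nat.card (SymG (n + 1)) ≤ Nat.card (SymG n) * (n + 2) := h1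
        _ ≤ (n + 1).factorial * (n + 2) := Nat.mul_le_mul_right _ hcard
        _ = (n + 2).factorial := by rw [Nat.factorial_succ (n + 1)]; ring

lemma lift_swap_rels (m : ℕ) : ∀ r ∈ allRels m,
    FreeGroup.lift (fun i : Fin m => Equiv.swap (i.castSucc) i.succ) r = 1 := by
  rintro r ((⟨i, j, hij, rfl⟩ | ⟨i, j, hij, rfl⟩) | ⟨i, rfl⟩)
  · simp only [map_mul, map_inv, FreeGroup.lift_apply_of]
    have hd : Equiv.Perm.Disjoint (Equiv.swap (Fin.castSucc i) i.succ)
        (Equiv.swap (Fin.castSucc j) j.succ) := by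
      intro x
      by_cases hx : x = Fin.castSucc i ∨ x = i.succ
      · right
        refine Equiv.swap_apply_of_ne_of_ne ?_ ?_ <;>
          rcases hx with hx | hx <;> subst hx <;>
          · intro hc
            rw [Fin.ext_iff] at hc
            simp only [Fin.coe_castSucc, Fin.val_succ] at hc
            omega
      · left
        push_neg at hx
        exact Equiv.swap_apply_of_ne_of_ne hx.1 hx.2
    have hc := hd.commute.eq
    rw [hc]; group
  · simp only [map_mul, map_inv, FreeGroup.lift_apply_of]
    rw [mul_inv_eq_one]
    have hbc : Fin.castSucc j = i.succ := by
      rw [Fin.ext_iff]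
      simp only [Fin.coe_castSucc, Fin.val_succ]
      omega
    rw [hbc]
    have hab : Fin.castSucc i ≠ i.succ := by
      rw [Fin.ne_iff_vne]
      simp only [Fin.coe_castSucc, Fin.val_succ]; omega
    have hac : Fin.castSucc i ≠ j.succ := by
      rw [Fin.ne_iff_vne]
      simp only [Fin.coe_castSucc, Fin.val_succ]; omega
    have hbc' : i.succ ≠ j.succ := by
      rw [Fin.ne_iff_vne]
      simp only [Fin.val_succ]; omega
    have L1 : Equiv.swap (Fin.castSucc i) i.succ * Equiv.swap i.succ (j.succ) *
        Equiv.swap (Fin.castSucc i) i.succ = Equiv.swap (Fin.castSucc i) (j.succ) := by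
      rw [Equiv.swap_comm (Fin.castSucc i) i.succ, Equiv.swap_comm i.succ j.succ]
      exact Equiv.swap_mul_swap_mul_swap hbc'.symm (Ne.symm hac)
    have R1 : Equiv.swap i.succ (j.succ) * Equiv.swap (Fin.castSucc i) i.succ *
        Equiv.swap i.succ (j.succ) = Equiv.swap (j.succ) (Fin.castSucc i) :=
      Equiv.swap_mul_swap_mul_swap hab hac
    rw [L1, R1, Equiv.swap_comm]
  · simp only [map_pow, FreeGroup.lift_apply_of, sq, map_mul, Equiv.swap_mul_self]

noncomputable def ψ (m : ℕ) : SymG m →* Equiv.Perm (Fin (m + 1)) :=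
  PresentedGroup.toGroup (lift_swap_rels m)

@[simp] lemma ψ_sg (m : ℕ) (i : Fin m) :
    ψ m (sg i) = Equiv.swap (Fin.castSucc i) i.succ :=
  PresentedGroup.toGroup.of _

lemma ψ_surj (m : ℕ) : Function.Surjective (ψ m) := by
  rw [← MonoidHom.range_eq_top, eq_top_iff]
  intro x _
  have hx : x ∈ Submonoid.closure
      (Set.range fun i : Fin m => Equiv.swap (Fin.castSucc i) i.succ) := by
    rw [Equiv.Perm.mclosure_swap_castSucc_succ]; trivial
  have hle : Submonoid.closure
      (Set.range fun i : Fin m => Equiv.swap (Fin.castSucc i) i.succ) ≤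
      (ψ m).range.toSubmonoid := by
    rw [Submonoid.closure_le]
    rintro _ ⟨i, rfl⟩
    exact ⟨sg i, ψ_sg m i⟩
  exact hle hx

lemma ψ_bij (m : ℕ) : Function.Bijective (ψ m) := by
  obtain ⟨⟨hfin⟩, hcard⟩ := symG_card m
  haveI := hfin
  refine (Nat.bijective_iff_surjective_and_card _).mpr ⟨ψ_surj m, ?_⟩
  have h2 : Nat.card (Equiv.Perm (Fin (m + 1))) = (m + 1).factorial := by
    rw [Nat.card_eq_fintype_card, Fintype.card_perm, Fintype.card_fin]
  refine le_antisymm (le_trans hcard h2.ge) ?_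
  exact Nat.card_le_card_of_surjective _ (ψ_surj m)

lemma ψ_mk (m : ℕ) (x : FreeGroup (Fin m)) :
    ψ m (PresentedGroup.mk (allRels m) x) =
      FreeGroup.lift (fun i : Fin m => Equiv.swap (Fin.castSucc i) i.succ) x := rfl

theorem ker_lift (m : ℕ) :
    MonoidHom.ker (FreeGroup.lift fun i : Fin m => Equiv.swap (Fin.castSucc i) i.succ)
      = Subgroup.normalClosure (allRels m) := by
  apply le_antisymm
  · intro x hx
    rw [MonoidHom.mem_ker] at hx
    rw [← QuotientGroup.eq_one_iff (N := Subgroup.normalClosure (allRels m)) x]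
    refine (ψ_bij m).injective ?_
    show ψ m (PresentedGroup.mk (allRels m) x) = ψ m 1
    rw [map_one]
    exact (ψ_mk m x).trans hx
  · exact Subgroup.normalClosure_le_normal fun r hr => lift_swap_rels m r hr

lemma normalClosure_union {G : Type*} [Group G] (s t : Set G) :
    Subgroup.normalClosure (s ∪ t) = Subgroup.normalClosure s ⊔ Subgroup.normalClosure t := by
  apply le_antisymm
  · haveI : (Subgroup.normalClosure s ⊔ Subgroup.normalClosure t).Normal :=
      Subgroup.sup_normal _ _
    refine Subgroup.normalClosure_le_normal ?_
    rintro x (hx | hx)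
    · exact SetLike.le_def.mp le_sup_left (Subgroup.subset_normalClosure hx)
    · exact SetLike.le_def.mp le_sup_right (Subgroup.subset_normalClosure hx)
  · exact sup_le (Subgroup.normalClosure_mono Set.subset_union_left)
      (Subgroup.normalClosure_mono Set.subset_union_right)

end BraidAux

/-- In `B_{m+1}`, the normal closure of the squares `σ_1², …, σ_m²` of the
Artin generators equals the pure braid group `P_{m+1}`, i.e. the kernel of the canonical
surjection `B_{m+1} → S_{m+1}` sending `σ_i` to the transposition `(i, i+1)`. -/
theorem normalClosure_squares_eq_pureBraidGroup (m : ℕ)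
    (π : BraidGroup m →* Equiv.Perm (Fin (m + 1)))
    (hπ : ∀ i : Fin m, π (PresentedGroup.of i) = Equiv.swap i.castSucc i.succ) :
    Subgroup.normalClosure
        (Set.range fun i : Fin m => (PresentedGroup.of (rels := braidRels m) i) ^ 2)
      = π.ker := by
  classical
  let mkB : FreeGroup (Fin m) →* PresentedGroup (braidRels m) := PresentedGroup.mk (braidRels m)
  have hsurj : Function.Surjective mkB := PresentedGroup.mk_surjective _
  -- the squares downstairs are the image of the squares upstairs
  have h1 : (Set.range fun i : Fin m => (PresentedGroup.of (rels := braidRels m) i) ^ 2)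
      = mkB '' (BraidAux.sqRels m) := by
    have hfun : (fun i : Fin m => (PresentedGroup.of (rels := braidRels m) i) ^ 2)
        = mkB ∘ (fun i : Fin m => (FreeGroup.of i) ^ 2) := by
      funext i
      simp only [Function.comp_apply, map_pow]
      rfl
    rw [hfun, Set.range_comp, BraidAux.sqRels]
  have hker_mkB : MonoidHom.ker mkB = Subgroup.normalClosure (braidRels m) := by
    ext x
    rw [MonoidHom.mem_ker]
    exact QuotientGroup.eq_one_iff x
  have hcomp : π.comp mkB
      = FreeGroup.lift (fun i : Fin m => Equiv.swap (Fin.castSucc i) i.succ) := by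
    apply FreeGroup.ext_hom
    intro i
    rw [FreeGroup.lift_apply_of]
    exact hπ i
  have hkerc : Subgroup.comap mkB π.ker = MonoidHom.ker (π.comp mkB) := by
    ext x
    exact Iff.rfl
  have hbot : Subgroup.map mkB (Subgroup.normalClosure (braidRels m)) = ⊥ :=
    (Subgroup.map_eq_bot_iff _).mpr hker_mkB.ge
  calc Subgroup.normalClosure
        (Set.range fun i : Fin m => (PresentedGroup.of (rels := braidRels m) i) ^ 2)
      = Subgroup.normalClosure (mkB '' BraidAux.sqRels m) := by rw [h1]
    _ = Subgroup.map mkB (Subgroup.normalClosure (BraidAux.sqRels m)) :=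
        (Subgroup.map_normalClosure _ _ hsurj).symm
    _ = ⊥ ⊔ Subgroup.map mkB (Subgroup.normalClosure (BraidAux.sqRels m)) := by
        rw [bot_sup_eq]
    _ = Subgroup.map mkB (Subgroup.normalClosure (braidRels m))
          ⊔ Subgroup.map mkB (Subgroup.normalClosure (BraidAux.sqRels m)) := by rw [hbot]
    _ = Subgroup.map mkB (Subgroup.normalClosure (braidRels m)
          ⊔ Subgroup.normalClosure (BraidAux.sqRels m)) := (Subgroup.map_sup _ _ _).symm
    _ = Subgroup.map mkB (Subgroup.normalClosure (BraidAux.allRels m)) := by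
        rw [BraidAux.allRels, BraidAux.normalClosure_union]
    _ = Subgroup.map mkB (MonoidHom.ker (π.comp mkB)) := by
        rw [hcomp, BraidAux.ker_lift]
    _ = Subgroup.map mkB (Subgroup.comap mkB π.ker) := by rw [hkerc]
    _ = (show Subgroup (PresentedGroup (braidRels m)) from π.ker) :=
        Subgroup.map_comap_eq_self_of_surjective hsurj _
end

section
/- Let A be a free ℤ/2-algebra on a single generating set and consider the 'stabilization' of a dga (A, ∂): the dga (A', ∂') obtained by adjoining two new generators x, y to the generating set with ∂'(x) = y, ∂'(y) = 0 and ∂' = ∂ on old generators, extended by the Leibniz rule. Then for any augmentation ε' of (A', ∂'), the linearized homology of (A', ∂') with respect to ε' is isomorphic to the linearized homology of (A, ∂) with respect to the restriction of ε' to A. -/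
open MonoidAlgebra

/-- The semi-free unital `ℤ/2`-algebra on a generating set `S` (words on `S` form a basis). -/
abbrev SemiFreeAlg (S : Type*) := MonoidAlgebra (ZMod 2) (FreeMonoid S)

/-- The generator of `SemiFreeAlg S` corresponding to `a : S`. -/
noncomputable def genOf {S : Type*} (a : S) : SemiFreeAlg S :=
  MonoidAlgebra.of (ZMod 2) (FreeMonoid S) (FreeMonoid.of a)

/-- The projection `π₁` onto the span of length-one words. -/
noncomputable def projOne (S : Type*) : SemiFreeAlg S →ₗ[ZMod 2] (S →₀ ZMod 2) :=
  Finsupp.lcomapDomain FreeMonoid.of FreeMonoid.of_injective ∘ₗ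
    (MonoidAlgebra.coeffLinearEquiv (ZMod 2)).toLinearMap

/-- The inclusion of the span of the generators into `SemiFreeAlg S`. -/
noncomputable def embOne (S : Type*) : (S →₀ ZMod 2) →ₗ[ZMod 2] SemiFreeAlg S :=
  (MonoidAlgebra.coeffLinearEquiv (ZMod 2)).symm.toLinearMap ∘ₗ
    Finsupp.lmapDomain (ZMod 2) (ZMod 2) FreeMonoid.of

/-- Homology of a linear endomorphism `d` (with `d² = 0`): `ker d / im d`. -/
abbrev lhomology {V : Type*} [AddCommGroup V] [Module (ZMod 2) V]
    (d : V →ₗ[ZMod 2] V) :=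
  LinearMap.ker d ⧸ Submodule.comap (LinearMap.ker d).subtype (LinearMap.range d)

/- ### Auxiliary lemmas -/

lemma addself {M : Type*} [AddCommMonoid M] [Module (ZMod 2) M] (x : M) : x + x = 0 := by
  calc x + x = (2 : ZMod 2) • x := (two_smul _ x).symm
  _ = (0 : ZMod 2) • x := by rw [show (2 : ZMod 2) = 0 by decide]
  _ = 0 := zero_smul _ x

lemma freeAlgHom_ext {S : Type*} {B : Type*} [Semiring B] [Algebra (ZMod 2) B]
    {f g : SemiFreeAlg S →ₐ[ZMod 2] B}
    (h : ∀ a, f (genOf a) = g (genOf a)) : f = g := by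
  apply MonoidAlgebra.algHom_ext
  intro x
  have key : ((f : SemiFreeAlg S →* B).comp (MonoidAlgebra.of (ZMod 2) (FreeMonoid S)))
      = ((g : SemiFreeAlg S →* B).comp (MonoidAlgebra.of (ZMod 2) (FreeMonoid S))) :=
    FreeMonoid.hom_eq (fun a => h a)
  simpa [MonoidAlgebra.of_apply] using DFunLike.congr_fun key x
  exact Subsingleton.elim _ _

lemma projOne_genOf {S : Type*} (s : S) : projOne S (genOf s) = Finsupp.single s 1 := by
  ext t
  show (Finsupp.single (FreeMonoid.of s) (1 : ZMod 2)) (FreeMonoid.of t) = _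
  exact Finsupp.single_apply_left FreeMonoid.of_injective _ _ _

lemma embOne_single {S : Type*} (a : S) (c : ZMod 2) :
    embOne S (Finsupp.single a c) = MonoidAlgebra.single (FreeMonoid.of a) c := by
  show MonoidAlgebra.ofCoeff (Finsupp.mapDomain FreeMonoid.of _) = _
  rw [Finsupp.mapDomain_single]; rfl

lemma embOne_single_one {S : Type*} (a : S) :
    embOne S (Finsupp.single a (1 : ZMod 2)) = genOf a := by
  rw [embOne_single]; rfl

lemma freeMonoid_map_injective {S T : Type*} {f : S → T} (hf : Function.Injective f) :
    Function.Injective (FreeMonoid.map f) := by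
  intro u v huv
  apply FreeMonoid.toList.injective
  have h2 := congrArg FreeMonoid.toList huv
  rw [FreeMonoid.toList_map, FreeMonoid.toList_map] at h2
  exact List.map_injective_iff.mpr hf h2

lemma of_inr_not_range {S : Type*} (b : Bool) :
    FreeMonoid.of (Sum.inr b : S ⊕ Bool) ∉ Set.range (FreeMonoid.map (Sum.inl : S → S ⊕ Bool)) := by
  rintro ⟨w, hw⟩
  have h2 := congrArg FreeMonoid.toList hw
  rw [FreeMonoid.toList_map, FreeMonoid.toList_of] at h2
  have hm : (Sum.inr b : S ⊕ Bool) ∈ List.map Sum.inl (FreeMonoid.toList w) := by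
    rw [h2]; simp
  rcases List.mem_map.mp hm with ⟨a, -, ha⟩
  exact Sum.inl_ne_inr ha

set_option maxHeartbeats 1000000

/-- Stabilizing a semi-free dga `(A, ∂)` on generators `S` by adjoining two new
generators `x, y` with `∂'x = y`, `∂'y = 0` does not change linearized homology: for any
augmentation `ε'` of the stabilization `(A', ∂')`, the linearized homology of `(A', ∂')`
w.r.t. `ε'` is isomorphic to that of `(A, ∂)` w.r.t. the restriction `ε = ε' ∘ incl`.
Here the stabilized generating set is `S ⊕ Bool`, with `x` (resp. `y`) the generator
indexed by `Sum.inr true` (resp. `Sum.inr false`). -/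
theorem linearized_homology_invariant_under_stabilization
    {S : Type*}
    (incl : SemiFreeAlg S →ₐ[ZMod 2] SemiFreeAlg (S ⊕ Bool))
    (hincl : ∀ a : S, incl (genOf a) = genOf (Sum.inl a))
    (d : SemiFreeAlg S →ₗ[ZMod 2] SemiFreeAlg S)
    (d' : SemiFreeAlg (S ⊕ Bool) →ₗ[ZMod 2] SemiFreeAlg (S ⊕ Bool))
    (hLeib : ∀ x y, d (x * y) = d x * y + x * d y)
    (hLeib' : ∀ x y, d' (x * y) = d' x * y + x * d' y)
    (hd2 : ∀ x, d (d x) = 0) (hd'2 : ∀ x, d' (d' x) = 0)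
    (hx : d' (genOf (Sum.inr true)) = genOf (Sum.inr false))
    (hy : d' (genOf (Sum.inr false)) = 0)
    (hcompat : ∀ x, d' (incl x) = incl (d x))
    (ε' : SemiFreeAlg (S ⊕ Bool) →ₐ[ZMod 2] ZMod 2)
    (hε' : ∀ x, ε' (d' x) = 0)
    (φ : SemiFreeAlg S ≃ₐ[ZMod 2] SemiFreeAlg S)
    (hφ : ∀ a : S, φ (genOf a)
        = genOf a + algebraMap (ZMod 2) (SemiFreeAlg S) (ε' (incl (genOf a))))
    (φ' : SemiFreeAlg (S ⊕ Bool) ≃ₐ[ZMod 2] SemiFreeAlg (S ⊕ Bool))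
    (hφ' : ∀ a : S ⊕ Bool, φ' (genOf a)
        = genOf a + algebraMap (ZMod 2) (SemiFreeAlg (S ⊕ Bool)) (ε' (genOf a))) :
    Nonempty
      (lhomology (projOne (S ⊕ Bool) ∘ₗ φ'.toLinearMap ∘ₗ d' ∘ₗ embOne (S ⊕ Bool))
        ≃ₗ[ZMod 2]
       lhomology (projOne S ∘ₗ φ.toLinearMap ∘ₗ d ∘ₗ embOne S)) := by
  classical
  set D' : ((S ⊕ Bool) →₀ ZMod 2) →ₗ[ZMod 2] ((S ⊕ Bool) →₀ ZMod 2) :=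
    projOne (S ⊕ Bool) ∘ₗ φ'.toLinearMap ∘ₗ d' ∘ₗ embOne (S ⊕ Bool) with hD'def
  set D : (S →₀ ZMod 2) →ₗ[ZMod 2] (S →₀ ZMod 2) :=
    projOne S ∘ₗ φ.toLinearMap ∘ₗ d ∘ₗ embOne S with hDdef
  -- the chain maps between the two complexes
  set i : (S →₀ ZMod 2) →ₗ[ZMod 2] ((S ⊕ Bool) →₀ ZMod 2) :=
    Finsupp.lmapDomain (ZMod 2) (ZMod 2) (Sum.inl : S → S ⊕ Bool) with hidef
  set p : ((S ⊕ Bool) →₀ ZMod 2) →ₗ[ZMod 2] (S →₀ ZMod 2) :=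
    Finsupp.lcomapDomain (Sum.inl : S → S ⊕ Bool) Sum.inl_injective with hpdef
  have i_apply : ∀ v, i v = Finsupp.mapDomain Sum.inl v := fun _ => rfl
  have p_apply : ∀ (w : (S ⊕ Bool) →₀ ZMod 2) (a : S), (p w) a = w (Sum.inl a) :=
    fun _ _ => rfl
  have hpi : ∀ v, p (i v) = v := by
    intro v; ext a
    rw [p_apply, i_apply, Finsupp.mapDomain_apply Sum.inl_injective]
  -- p kills singles supported at inr
  have hpinr : ∀ (b : Bool) (c : ZMod 2), p (Finsupp.single (Sum.inr b) c) = 0 := by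
    intro b c; ext a
    rw [p_apply]
    simp [Finsupp.single_apply]
  have hp_single : ∀ (a : S) (c : ZMod 2),
      p (Finsupp.single (Sum.inl a) c) = Finsupp.single a c := by
    intro a c; ext a'
    rw [p_apply]
    simp [Finsupp.single_apply, Sum.inl_injective.eq_iff]
  -- incl is mapDomain along FreeMonoid.map Sum.inl
  have hinclD : incl = MonoidAlgebra.mapDomainAlgHom (ZMod 2) (ZMod 2)
      (FreeMonoid.map (Sum.inl : S → S ⊕ Bool)) := by
    apply freeAlgHom_ext
    intro a
    rw [hincl]
    simp [genOf, MonoidAlgebra.of_apply, FreeMonoid.map_of]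
  have hincl_apply : ∀ z, incl z
      = MonoidAlgebra.ofCoeff (Finsupp.mapDomain (FreeMonoid.map (Sum.inl : S → S ⊕ Bool)) z.coeff) := by
    intro z; rw [hinclD]; rfl
  -- projOne intertwines incl and i
  have hproj_incl : ∀ z, projOne (S ⊕ Bool) (incl z) = i (projOne S z) := by
    intro z
    ext s
    have lhs : projOne (S ⊕ Bool) (incl z) s
        = (Finsupp.mapDomain (FreeMonoid.map (Sum.inl : S → S ⊕ Bool)) z.coeff)
            (FreeMonoid.of s) := by
      rw [hincl_apply]; rfl
    cases s with
    | inl a =>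
      rw [lhs, i_apply, Finsupp.mapDomain_apply Sum.inl_injective]
      have : FreeMonoid.of (Sum.inl a : S ⊕ Bool)
          = FreeMonoid.map (Sum.inl : S → S ⊕ Bool) (FreeMonoid.of a) := rfl
      rw [this, Finsupp.mapDomain_apply (freeMonoid_map_injective Sum.inl_injective)]
      rfl
    | inr b =>
      rw [lhs, i_apply,
        Finsupp.mapDomain_notin_range _ _ (of_inr_not_range b),
        Finsupp.mapDomain_notin_range]
      rintro ⟨a, ha⟩
      exact Sum.inl_ne_inr ha
  -- φ' ∘ incl = incl ∘ φ
  have hphi_incl : ∀ z, φ' (incl z) = incl (φ z) := by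
    have : (φ'.toAlgHom.comp incl) = (incl.comp φ.toAlgHom) := by
      apply freeAlgHom_ext
      intro a
      simp only [AlgHom.coe_comp, Function.comp_apply, AlgEquiv.toAlgHom_eq_coe,
        AlgHom.coe_coe]
      show φ' (incl (genOf a)) = incl (φ (genOf a))
      rw [hincl, hφ', hφ, map_add, hincl, AlgHom.commutes]
    intro z
    exact DFunLike.congr_fun this z
  -- ε' vanishes on y
  have hεy : ε' (genOf (Sum.inr false : S ⊕ Bool)) = 0 := by
    rw [← hx]; exact hε' _
  have hφ'y : φ' (genOf (Sum.inr false : S ⊕ Bool)) = genOf (Sum.inr false) := by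
    rw [hφ' (Sum.inr false), hεy, map_zero, add_zero]
  -- computation of D' on the three kinds of generators
  have hD'x : ∀ c : ZMod 2, D' (Finsupp.single (Sum.inr true) c)
      = Finsupp.single (Sum.inr false) c := by
    intro c
    have h1 : Finsupp.single (Sum.inr true : S ⊕ Bool) c
        = c • Finsupp.single (Sum.inr true : S ⊕ Bool) (1 : ZMod 2) := by
      rw [Finsupp.smul_single, smul_eq_mul, mul_one]
    rw [h1, map_smul]
    rw [hD'def]
    simp only [LinearMap.coe_comp, Function.comp_apply]
    rw [embOne_single_one, hx]
    show c • (projOne (S ⊕ Bool) (φ' (genOf (Sum.inr false)))) = _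
    rw [hφ'y, projOne_genOf, Finsupp.smul_single, smul_eq_mul, mul_one]
  have hD'y : ∀ c : ZMod 2, D' (Finsupp.single (Sum.inr false) c) = 0 := by
    intro c
    have h1 : Finsupp.single (Sum.inr false : S ⊕ Bool) c
        = c • Finsupp.single (Sum.inr false : S ⊕ Bool) (1 : ZMod 2) := by
      rw [Finsupp.smul_single, smul_eq_mul, mul_one]
    rw [h1, map_smul]
    rw [hD'def]
    simp only [LinearMap.coe_comp, Function.comp_apply]
    rw [embOne_single_one, hy, map_zero, map_zero, smul_zero]
  have hchain : ∀ v, D' (i v) = i (D v) := by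
    have key : D' ∘ₗ i = i ∘ₗ D := by
      apply Finsupp.lhom_ext
      intro a c
      simp only [LinearMap.coe_comp, Function.comp_apply]
      have h1 : i (Finsupp.single a c) = Finsupp.single (Sum.inl a) c := by
        rw [i_apply, Finsupp.mapDomain_single]
      have h2 : Finsupp.single (Sum.inl a : S ⊕ Bool) c
          = c • Finsupp.single (Sum.inl a : S ⊕ Bool) (1 : ZMod 2) := by
        rw [Finsupp.smul_single, smul_eq_mul, mul_one]
      have h3 : Finsupp.single a c = c • Finsupp.single a (1 : ZMod 2) := by
        rw [Finsupp.smul_single, smul_eq_mul, mul_one]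
      rw [h1, h2, map_smul, h3, map_smul, map_smul]
      congr 1
      rw [hD'def, hDdef]
      simp only [LinearMap.coe_comp, Function.comp_apply]
      rw [embOne_single_one, embOne_single_one]
      simp only [AlgEquiv.toLinearMap_apply]
      rw [← hincl, hcompat, hphi_incl, hproj_incl]
    intro v
    exact DFunLike.congr_fun key v
  have hpD' : ∀ w, p (D' w) = D (p w) := by
    have key : p ∘ₗ D' = D ∘ₗ p := by
      apply Finsupp.lhom_ext
      intro s c
      simp only [LinearMap.coe_comp, Function.comp_apply]
      cases s with
      | inl a =>
        have h1 : Finsupp.single (Sum.inl a : S ⊕ Bool) c = i (Finsupp.single a c) := by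
          rw [i_apply, Finsupp.mapDomain_single]
        rw [h1, hchain, hpi, hpi]
      | inr b =>
        cases b with
        | true => rw [hD'x, hpinr, hpinr, map_zero]
        | false => rw [hD'y, hpinr, map_zero, map_zero]
    intro w
    exact DFunLike.congr_fun key w
  -- the chain homotopy h
  set h : ((S ⊕ Bool) →₀ ZMod 2) →ₗ[ZMod 2] ((S ⊕ Bool) →₀ ZMod 2) :=
    Finsupp.lsum (ZMod 2) (Sum.elim (fun _ : S => (0 : ZMod 2 →ₗ[ZMod 2] _))
      (fun b : Bool => if b then (0 : ZMod 2 →ₗ[ZMod 2] _)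
        else Finsupp.lsingle (Sum.inr true)))
    with hhdef
  have hh_inl : ∀ (a : S) (c : ZMod 2), h (Finsupp.single (Sum.inl a) c) = 0 := by
    intro a c
    rw [hhdef]
    rw [Finsupp.lsum_single]; simp
  have hh_x : ∀ c : ZMod 2, h (Finsupp.single (Sum.inr true) c) = 0 := by
    intro c
    rw [hhdef]
    simp
  have hh_y : ∀ c : ZMod 2,
      h (Finsupp.single (Sum.inr false) c) = Finsupp.single (Sum.inr true) c := by
    intro c
    rw [hhdef]
    simp
  have hhi : ∀ v, h (i v) = 0 := by
    have key : h ∘ₗ i = 0 := by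
      apply Finsupp.lhom_ext
      intro a c
      simp only [LinearMap.coe_comp, Function.comp_apply, LinearMap.zero_apply]
      have h1 : i (Finsupp.single a c) = Finsupp.single (Sum.inl a) c := by
        rw [i_apply, Finsupp.mapDomain_single]
      rw [h1, hh_inl]
    intro v
    exact DFunLike.congr_fun key v
  -- the homotopy identity
  have hhom : ∀ w, D' (h w) + h (D' w) = w + i (p w) := by
    have key : D' ∘ₗ h + h ∘ₗ D' = LinearMap.id + i ∘ₗ p := by
      apply Finsupp.lhom_ext
      intro s c
      simp only [LinearMap.add_apply, LinearMap.coe_comp, Function.comp_apply,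
        LinearMap.id_apply]
      cases s with
      | inl a =>
        have h1 : Finsupp.single (Sum.inl a : S ⊕ Bool) c = i (Finsupp.single a c) := by
          rw [i_apply, Finsupp.mapDomain_single]
        rw [hh_inl, map_zero, zero_add, h1, hchain, hhi, hpi, ← h1]
        exact (addself _).symm
      | inr b =>
        cases b with
        | true =>
          rw [hh_x, map_zero, zero_add, hD'x, hh_y, hpinr, map_zero, add_zero]
        | false =>
          rw [hh_y, hD'x, hD'y, map_zero, add_zero, hpinr, map_zero, add_zero]
    intro w
    exact DFunLike.congr_fun key w
  -- p maps ker D' into ker D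
  have hpker : ∀ w ∈ LinearMap.ker D', p w ∈ LinearMap.ker D := by
    intro w hw
    rw [LinearMap.mem_ker] at hw ⊢
    rw [← hpD', hw, map_zero]
  -- the map from ker D' to the homology of D
  set f : (LinearMap.ker D') →ₗ[ZMod 2]
      lhomology D :=
    (Submodule.mkQ _) ∘ₗ (p.restrict hpker) with hfdef
  have hf_apply : ∀ (w : LinearMap.ker D'),
      f w = Submodule.mkQ _ ⟨p w.1, hpker w.1 w.2⟩ := fun _ => rfl
  have hfsurj : Function.Surjective f := by
    intro q
    obtain ⟨⟨v, hv⟩, rfl⟩ := Submodule.mkQ_surjective _ q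
    have hiv : i v ∈ LinearMap.ker D' := by
      rw [LinearMap.mem_ker, hchain, LinearMap.mem_ker.mp hv, map_zero]
    refine ⟨⟨i v, hiv⟩, ?_⟩
    rw [hf_apply]
    congr 1
    exact Subtype.ext (hpi v)
  have hfker : LinearMap.ker f
      = Submodule.comap (LinearMap.ker D').subtype (LinearMap.range D') := by
    ext w
    rw [LinearMap.mem_ker, Submodule.mem_comap, Submodule.subtype_apply,
      LinearMap.mem_range, hf_apply, Submodule.mkQ_apply, Submodule.Quotient.mk_eq_zero, Submodule.mem_comap,
      Submodule.subtype_apply, LinearMap.mem_range]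
    constructor
    · rintro ⟨v, hv⟩
      refine ⟨h w.1 + i v, ?_⟩
      rw [map_add]
      have hw0 : D' w.1 = 0 := LinearMap.mem_ker.mp w.2
      have := hhom w.1
      rw [hw0, map_zero, add_zero] at this
      rw [this, hchain, hv, add_assoc, addself, add_zero]
    · rintro ⟨u, hu⟩
      exact ⟨p u, by rw [← hpD', hu]⟩
  exact ⟨(Submodule.quotEquivOfEq _ _ hfker.symm).trans
    (f.quotKerEquivOfSurjective hfsurj)⟩
end
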